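/- (Proposition VGcf) Let Z be a standard Gaussian random variable and let V be a Gamma(α, β) distributed random variable independent of Z, with α, β > 0, and let σ > 0 be fixed. Then the characteristic function of the symmetric Variance Gamma variable X = σ√V · Z is ψ_X(t) = (1 + t²σ²/(2β))^{-α} for all real t. -/

import Mathlib

open MeasureTheory ProbabilityTheory Complex Real
open scoped ENNReal NNReal

/-- Characteristic function of the standard Gaussian. -/
lemma gauss_cf_aux (c : ℝ) :
    ∫ x : ℝ, Complex.exp (Complex.I * c * x) ∂(gaussianReal 0 1)
      = ((Real.exp (-(c ^ 2) / 2) : ℝ) : ℂ) := by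
  rw [gaussianReal_of_var_ne_zero 0 one_ne_zero]
  have hmeas : Measurable fun x : ℝ => (gaussianPDFReal 0 1 x).toNNReal :=
    (measurable_gaussianPDFReal 0 1).real_toNNReal
  have hd : gaussianPDF 0 1 = fun x => ((gaussianPDFReal 0 1 x).toNNReal : ℝ≥0∞) := rfl
  rw [hd, integral_withDensity_eq_integral_smul hmeas]
  have hpdf : ∀ x : ℝ, (gaussianPDFReal 0 1 x).toNNReal •
      Complex.exp (Complex.I * c * x)
      = ((Real.sqrt (2 * π))⁻¹ : ℂ) *
        Complex.exp ((-(1/2) : ℂ) * x ^ 2 + (Complex.I * c) * x + 0) := by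
    intro x
    have h0 : gaussianPDFReal 0 1 x = (Real.sqrt (2 * π))⁻¹ * Real.exp (-x ^ 2 / 2) := by
      rw [gaussianPDFReal]; norm_num
    have h2 : ((-(1/2) : ℂ) * x ^ 2 + (Complex.I * c) * x + 0)
        = ((-x ^ 2 / 2 : ℝ) : ℂ) + Complex.I * c * x := by
      push_cast; ring
    rw [NNReal.smul_def, Real.coe_toNNReal _ (gaussianPDFReal_nonneg 0 1 x), h0, h2,
      Complex.exp_add, Complex.real_smul]
    push_cast [Complex.ofReal_exp]
    ring
  simp_rw [hpdf]
  rw [integral_const_mul, integral_cexp_quadratic (by norm_num : (-(1/2) : ℂ).re < 0)]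
  have h3 : ((π : ℂ) / -(-(1/2))) ^ (1 / 2 : ℂ) = ((Real.sqrt (2 * π) : ℝ) : ℂ) := by
    rw [Real.sqrt_eq_rpow, Complex.ofReal_cpow (by positivity)]
    push_cast
    congr 1
    ring
  rw [h3]
  have h4 : (0 : ℂ) - (Complex.I * c) ^ 2 / (4 * -(1/2)) = ((-(c ^ 2) / 2 : ℝ) : ℂ) := by
    have hI : (Complex.I * (c : ℂ)) ^ 2 = -(c : ℂ) ^ 2 := by
      rw [mul_pow, Complex.I_sq]; ring
    rw [hI]; push_cast; ring
  rw [h4, ← mul_assoc, ← Complex.ofReal_inv, ← Complex.ofReal_mul,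
    inv_mul_cancel₀ (by positivity : Real.sqrt (2 * π) ≠ 0)]
  rw [Complex.ofReal_exp, Complex.ofReal_one, one_mul]

/-- Laplace transform of the Gamma distribution. -/
lemma gamma_laplace_aux {α β : ℝ} (hα : 0 < α) (hβ : 0 < β) {s : ℝ} (hs : 0 ≤ s) :
    ∫ v, Real.exp (-(s * v)) ∂(gammaMeasure α β) = (1 + s / β) ^ (-α) := by
  have hβs : (0 : ℝ) < β + s := by linarith
  have hmeas : Measurable fun x : ℝ => (gammaPDFReal α β x).toNNReal :=
    (measurable_gammaPDFReal α β).real_toNNReal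
  have hd : gammaPDF α β = fun x => ((gammaPDFReal α β x).toNNReal : ℝ≥0∞) := rfl
  rw [gammaMeasure, hd, integral_withDensity_eq_integral_smul hmeas]
  have hpdf : (fun v : ℝ => (gammaPDFReal α β v).toNNReal • Real.exp (-(s * v)))
      = Set.indicator (Set.Ici 0)
        (fun v => β ^ α / Real.Gamma α * (v ^ (α - 1) * Real.exp (-((β + s) * v)))) := by
    ext v
    rw [NNReal.smul_def, Real.coe_toNNReal _ (gammaPDFReal_nonneg hα hβ v), smul_eq_mul,
      gammaPDFReal]
    by_cases hv : 0 ≤ v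
    · rw [if_pos hv, Set.indicator_of_mem (Set.mem_Ici.mpr hv), mul_assoc, mul_assoc,
        ← Real.exp_add]
      ring_nf
    · rw [if_neg hv, Set.indicator_of_notMem (by simpa using hv), zero_mul]
  rw [hpdf, integral_indicator measurableSet_Ici, MeasureTheory.integral_Ici_eq_integral_Ioi,
    integral_const_mul, integral_rpow_mul_exp_neg_mul_Ioi hα hβs]
  have hΓ : Real.Gamma α ≠ 0 := (Real.Gamma_pos_of_pos hα).ne'
  have h1 : (1 : ℝ) + s / β = (β + s) / β := by field_simp
  rw [h1, Real.rpow_neg (by positivity), Real.div_rpow hβs.le hβ.le, inv_div]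
  have h2 : (0:ℝ) < (β + s) ^ α := Real.rpow_pos_of_pos hβs α
  have h3 : (0:ℝ) < β ^ α := Real.rpow_pos_of_pos hβ α
  rw [one_div, Real.inv_rpow hβs.le]
  field_simp

/-- **Proposition VGcf.** The characteristic function of the symmetric
Variance Gamma variable `X = σ√V ⬝ Z`, where `Z` is standard Gaussian and `V` is an
independent `Gamma(α, β)` variable, is `t ↦ (1 + t²σ²/(2β))^(-α)`. -/
theorem charFun_symmetricVarianceGamma
    {Ω : Type*} [MeasurableSpace Ω] (P : Measure Ω) [IsProbabilityMeasure P]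
    (α β σ : ℝ) (hα : 0 < α) (hβ : 0 < β) (hσ : 0 < σ)
    (V Z : Ω → ℝ) (hVm : Measurable V) (hZm : Measurable Z)
    (hV : Measure.map V P = gammaMeasure α β)
    (hZ : Measure.map Z P = gaussianReal 0 1)
    (hindep : IndepFun V Z P) (t : ℝ) :
    ∫ ω, Complex.exp (Complex.I * t * (σ * Real.sqrt (V ω) * Z ω)) ∂P
      = (((1 + t ^ 2 * σ ^ 2 / (2 * β)) ^ (-α) : ℝ) : ℂ) := by
  have hΓprob : IsProbabilityMeasure (gammaMeasure α β) :=
    isProbabilityMeasure_gammaMeasure hα hβ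
  set f : ℝ × ℝ → ℂ := fun p => Complex.exp (Complex.I * t * (σ * Real.sqrt p.1 * p.2)) with hf
  have hfc : Continuous f := by
    apply Complex.continuous_exp.comp
    fun_prop
  have hmap := (indepFun_iff_map_prod_eq_prod_map_map hVm.aemeasurable hZm.aemeasurable).mp hindep
  rw [hV, hZ] at hmap
  have h1 : ∫ ω, Complex.exp (Complex.I * t * (σ * Real.sqrt (V ω) * Z ω)) ∂P
      = ∫ p, f p ∂((gammaMeasure α β).prod (gaussianReal 0 1)) := by
    rw [← hmap, integral_map (hVm.prodMk hZm).aemeasurable hfc.aestronglyMeasurable]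
  have hfint : Integrable f ((gammaMeasure α β).prod (gaussianReal 0 1)) := by
    refine (integrable_const (1 : ℝ)).mono' hfc.aestronglyMeasurable (ae_of_all _ fun p => ?_)
    rw [hf]
    simp only [Complex.norm_exp]
    have : (Complex.I * t * (σ * Real.sqrt p.1 * p.2)).re = 0 := by
      simp [mul_comm, mul_assoc]
    rw [this, Real.exp_zero]
  rw [h1, integral_prod f hfint]
  have h2 : ∀ v : ℝ, (∫ z, f (v, z) ∂(gaussianReal 0 1))
      = ((Real.exp (-((t * σ * Real.sqrt v) ^ 2) / 2) : ℝ) : ℂ) := by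
    intro v
    rw [← gauss_cf_aux (t * σ * Real.sqrt v)]
    congr 1 with z
    rw [hf]
    push_cast
    ring_nf
  simp_rw [h2]
  have hae : ∀ᵐ v ∂(gammaMeasure α β), 0 ≤ v := by
    rw [ae_iff]
    have hset : {v : ℝ | ¬ 0 ≤ v} = Set.Iio 0 := by ext v; simp
    rw [hset, gammaMeasure, withDensity_apply _ measurableSet_Iio]
    exact lintegral_gammaPDF_of_nonpos le_rfl
  have h3 : ∫ v, ((Real.exp (-((t * σ * Real.sqrt v) ^ 2) / 2) : ℝ) : ℂ) ∂(gammaMeasure α β)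
      = ∫ v, ((Real.exp (-(t ^ 2 * σ ^ 2 / 2 * v)) : ℝ) : ℂ) ∂(gammaMeasure α β) := by
    refine integral_congr_ae ?_
    filter_upwards [hae] with v hv
    rw [mul_pow, mul_pow, Real.sq_sqrt hv]
    norm_num
    ring_nf
  have h5 : ∫ v, ((Real.exp (-(t ^ 2 * σ ^ 2 / 2 * v)) : ℝ) : ℂ) ∂(gammaMeasure α β)
      = ((∫ v, Real.exp (-(t ^ 2 * σ ^ 2 / 2 * v)) ∂(gammaMeasure α β) : ℝ) : ℂ) :=
    integral_ofReal
  rw [h3, h5, gamma_laplace_aux hα hβ (by positivity)]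
  norm_num
  rw [div_div]
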